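/- Let (Ω, 𝔄, P) be a probability space carrying a measurable stochastic process Z = (Z_t)_{t∈[0,1]} with continuous sample paths, 0 ≤ Z_t ≤ m pointwise for some constant m ≥ 1, and E[Z_t] = 1 for every t ∈ [0,1], and a random variable Y > 0 independent of Z whose distribution function H is continuous and satisfies H(u) = u + A u^{1+δ} + o(u^{1+δ}) as u ↓ 0, for some constants A ∈ ℝ and δ > 0. Fix M < 0 and define X_t = max(−Y/Z_t, M) (with X_t = M when Z_t = 0). Then there exists ε₀ > 0 such that for every bounded f : [0,1] → (−∞,0] with at most finitely many discontinuities and sup_{t∈[0,1]}|f(t)| ≤ ε₀: lim_{c↓0} c^{−(1+δ)} ( P(X_t > c·f(t) for all t ∈ [0,1]) − c·E[inf_{t∈[0,1]}(|f(t)|Z_t)] − A c^{1+δ} E[(inf_{t∈[0,1]}(|f(t)|Z_t))^{1+δ}] ) = 0. -/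

import Mathlib

open MeasureTheory ProbabilityTheory Filter Topology

lemma aux_ciInf_eq {g : Set.Icc (0:ℝ) 1 → ℝ} (hg0 : ∀ t, 0 ≤ g t)
    {S D : Set (Set.Icc (0:ℝ) 1)} (hS : Dense S)
    (hcont : ∀ t, t ∉ D → ContinuousAt g t) :
    (⨅ t, g t) = ⨅ t : ↥(S ∪ D), g ↑t := by
  have hbdd : BddBelow (Set.range g) := ⟨0, by rintro _ ⟨t, rfl⟩; exact hg0 t⟩
  have hbdd' : BddBelow (Set.range fun t : ↥(S ∪ D) => g ↑t) :=
    ⟨0, by rintro _ ⟨t, rfl⟩; exact hg0 _⟩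
  have hne : Nonempty ↥(S ∪ D) := by
    rcases hS.nonempty with ⟨s, hs⟩
    exact ⟨⟨s, Or.inl hs⟩⟩
  refine le_antisymm (le_ciInf fun t => ciInf_le hbdd _) (le_ciInf fun t => ?_)
  by_cases ht : t ∈ D
  · exact ciInf_le hbdd' (⟨t, Or.inr ht⟩ : ↥(S ∪ D))
  · obtain ⟨x, hxS, hxlim⟩ := mem_closure_iff_seq_limit.mp (hS t)
    have hg : Tendsto (fun n => g (x n)) atTop (𝓝 (g t)) :=
      ((hcont t ht).tendsto).comp hxlim
    exact ge_of_tendsto hg (Eventually.of_forall fun n =>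
      ciInf_le hbdd' (⟨x n, Or.inl (hxS n)⟩ : ↥(S ∪ D)))

lemma aux_atom {Ω : Type*} [MeasurableSpace Ω] (P : Measure Ω) [IsProbabilityMeasure P]
    (Y : Ω → ℝ) (hYmeas : Measurable Y)
    (hHcont : Continuous fun u => (P {ω | Y ω ≤ u}).toReal) (u : ℝ) :
    P {ω | Y ω = u} = 0 := by
  set Hr : ℝ → ℝ := fun u => (P {ω | Y ω ≤ u}).toReal with hHr
  have key : ∀ ε : ℝ, 0 < ε → (P {ω | Y ω = u}).toReal ≤ Hr u - Hr (u - ε) := by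
    intro ε hε
    have hdisj : Disjoint {ω | Y ω = u} {ω | Y ω ≤ u - ε} := by
      rw [Set.disjoint_left]
      rintro ω (rfl : Y ω = u) (h2 : Y ω ≤ Y ω - ε)
      linarith
    have hsub : {ω | Y ω = u} ∪ {ω | Y ω ≤ u - ε} ⊆ {ω | Y ω ≤ u} := by
      rintro ω (h | h) <;> simp only [Set.mem_setOf_eq] at h ⊢
      · exact le_of_eq h
      · linarith
    have hmeas2 : MeasurableSet {ω | Y ω ≤ u - ε} := hYmeas measurableSet_Iic
    have : P {ω | Y ω = u} + P {ω | Y ω ≤ u - ε} ≤ P {ω | Y ω ≤ u} :=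
      (measure_union hdisj hmeas2).symm.le.trans (measure_mono hsub)
    have h1 : (P {ω | Y ω = u}).toReal + (P {ω | Y ω ≤ u - ε}).toReal
        ≤ (P {ω | Y ω ≤ u}).toReal := by
      rw [← ENNReal.toReal_add (measure_ne_top P _) (measure_ne_top P _)]
      exact ENNReal.toReal_mono (measure_ne_top P _) this
    simp only [hHr]; linarith
  have htend : Tendsto (fun ε : ℝ => Hr u - Hr (u - ε)) (𝓝[>] 0) (𝓝 0) := by
    have : Tendsto (fun ε : ℝ => Hr u - Hr (u - ε)) (𝓝 0) (𝓝 (Hr u - Hr (u - 0))) :=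
      (tendsto_const_nhds.sub ((hHcont.tendsto _).comp
        (tendsto_const_nhds.sub tendsto_id)))
    simpa using this.mono_left nhdsWithin_le_nhds
  have h0 : (P {ω | Y ω = u}).toReal ≤ 0 :=
    ge_of_tendsto htend (eventually_nhdsWithin_of_forall fun ε hε => key ε hε)
  have := le_antisymm h0 ENNReal.toReal_nonneg
  rcases (ENNReal.toReal_eq_zero_iff _).mp this with h | h
  · exact h
  · exact absurd h (measure_ne_top P _)

lemma aux_indep {Ω : Type*} [MeasurableSpace Ω] (P : Measure Ω) [IsProbabilityMeasure P]
    (Y W : Ω → ℝ) (hY : Measurable Y) (hW : Measurable W)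
    (hind : IndepFun W Y P) {s : Set (ℝ × ℝ)} (hs : MeasurableSet s) :
    P {ω | (W ω, Y ω) ∈ s} = ∫⁻ ω, P {ω' | (W ω, Y ω') ∈ s} ∂P := by
  have h1 : P.map (fun ω => (W ω, Y ω)) = (P.map W).prod (P.map Y) :=
    (indepFun_iff_map_prod_eq_prod_map_map hW.aemeasurable hY.aemeasurable).mp hind
  have hYmap : IsProbabilityMeasure (P.map Y) := Measure.isProbabilityMeasure_map hY.aemeasurable
  calc P {ω | (W ω, Y ω) ∈ s}
      = P.map (fun ω => (W ω, Y ω)) s := (Measure.map_apply (hW.prodMk hY) hs).symm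
    _ = ((P.map W).prod (P.map Y)) s := by rw [h1]
    _ = ∫⁻ w, (P.map Y) (Prod.mk w ⁻¹' s) ∂(P.map W) := Measure.prod_apply hs
    _ = ∫⁻ ω, (P.map Y) (Prod.mk (W ω) ⁻¹' s) ∂P :=
        lintegral_map (measurable_measure_prodMk_left hs) hW
    _ = ∫⁻ ω, P {ω' | (W ω, Y ω') ∈ s} ∂P := by
        refine lintegral_congr fun ω => ?_
        rw [Measure.map_apply hY (measurable_prodMk_left hs)]
        rfl
theorem stmt13
    {Ω : Type*} [MeasurableSpace Ω] (P : Measure Ω) [IsProbabilityMeasure P]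
    (Z : Ω → Set.Icc (0:ℝ) 1 → ℝ) (m : ℝ) (hm : 1 ≤ m)
    (hZmeas : ∀ t, Measurable fun ω => Z ω t)
    (hZcont : ∀ ω, Continuous (Z ω))
    (hZbd : ∀ ω t, Z ω t ∈ Set.Icc (0:ℝ) m)
    (hZmean : ∀ t, ∫ ω, Z ω t ∂P = 1)
    (Y : Ω → ℝ) (hYmeas : Measurable Y) (hYpos : ∀ ω, 0 < Y ω)
    (hindep : IndepFun Y Z P)
    (A δ : ℝ) (hδ : 0 < δ)
    (hHcont : Continuous fun u => (P {ω | Y ω ≤ u}).toReal)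
    (hH : Tendsto
      (fun u => ((P {ω | Y ω ≤ u}).toReal - u - A * u ^ (1 + δ)) / u ^ (1 + δ))
      (𝓝[>] 0) (𝓝 0))
    (M : ℝ) (hM : M < 0)
    (X : Ω → Set.Icc (0:ℝ) 1 → ℝ)
    (hX : ∀ ω t, X ω t = if Z ω t = 0 then M else max (-(Y ω) / Z ω t) M) :
    ∃ ε₀ > (0:ℝ), ∀ f : Set.Icc (0:ℝ) 1 → ℝ,
      (∃ B, ∀ t, |f t| ≤ B) → (∀ t, f t ≤ 0) →
      {t | ¬ ContinuousAt f t}.Finite → (⨆ t, |f t|) ≤ ε₀ →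
      Tendsto (fun c : ℝ => c ^ (-(1 + δ)) *
          ((P {ω | ∀ t, c * f t < X ω t}).toReal
            - c * ∫ ω, (⨅ t, |f t| * Z ω t) ∂P
            - A * c ^ (1 + δ) * ∫ ω, (⨅ t, |f t| * Z ω t) ^ (1 + δ) ∂P))
        (𝓝[>] 0) (𝓝 0) := by
  have h1δ : (0:ℝ) < 1 + δ := by linarith
  refine ⟨1, one_pos, fun f hBex hfneg hfdisc _ => ?_⟩
  obtain ⟨B, hB⟩ := hBex
  -- X is always negative
  have hXneg : ∀ ω t, X ω t < 0 := by
    intro ω t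
    rw [hX ω t]
    split_ifs with hz
    · exact hM
    · have hzpos : 0 < Z ω t := lt_of_le_of_ne (hZbd ω t).1 (Ne.symm hz)
      exact max_lt (div_neg_of_neg_of_pos (neg_neg_iff_pos.mpr (hYpos ω)) hzpos) hM
  by_cases hcase : ∃ t0, f t0 = 0
  · -- some f t = 0 : everything is identically zero
    obtain ⟨t0, ht0⟩ := hcase
    have hW0 : ∀ ω, (⨅ t, |f t| * Z ω t) = 0 := by
      intro ω
      refine le_antisymm ?_ (le_ciInf fun t => mul_nonneg (abs_nonneg _) (hZbd ω t).1)
      have := ciInf_le (f := fun t => |f t| * Z ω t)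
        ⟨0, by rintro _ ⟨t, rfl⟩; exact mul_nonneg (abs_nonneg _) (hZbd ω t).1⟩ t0
      simpa [ht0] using this
    have hevt : ∀ c : ℝ, {ω | ∀ t, c * f t < X ω t} = (∅ : Set Ω) := by
      intro c
      ext ω
      simp only [Set.mem_setOf_eq, Set.mem_empty_iff_false, iff_false, not_forall]
      exact ⟨t0, by simp [ht0, not_lt, (hXneg ω t0).le]⟩
    have hzero : ∀ c : ℝ, c ^ (-(1 + δ)) *
          ((P {ω | ∀ t, c * f t < X ω t}).toReal
            - c * ∫ ω, (⨅ t, |f t| * Z ω t) ∂P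
            - A * c ^ (1 + δ) * ∫ ω, (⨅ t, |f t| * Z ω t) ^ (1 + δ) ∂P) = 0 := by
      intro c
      have h1 : ∫ ω, (⨅ t, |f t| * Z ω t) ∂P = 0 := by
        rw [integral_congr_ae (Eventually.of_forall hW0)]; simp
      have h2 : ∫ ω, (⨅ t, |f t| * Z ω t) ^ (1 + δ) ∂P = 0 := by
        rw [integral_congr_ae (g := fun _ => (0:ℝ)) (Eventually.of_forall fun ω => by
          rw [hW0 ω, Real.zero_rpow h1δ.ne'])]
        simp
      rw [hevt c, h1, h2]
      simp
    exact Tendsto.congr (fun c => (hzero c).symm) tendsto_const_nhds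
  · -- main case : f < 0 everywhere
    push_neg at hcase
    have hpos : ∀ t, f t < 0 := fun t => lt_of_le_of_ne (hfneg t) (hcase t)
    have hB0 : 0 < B :=
      lt_of_lt_of_le (abs_pos.mpr (hpos ⟨0, by norm_num⟩).ne) (hB ⟨0, by norm_num⟩)
    have hm0 : (0:ℝ) < m := lt_of_lt_of_le one_pos hm
    -- countable dense set + discontinuity set
    obtain ⟨S, hScount, hSdense⟩ :=
      TopologicalSpace.exists_countable_dense (Set.Icc (0:ℝ) 1)
    set D : Set (Set.Icc (0:ℝ) 1) := {t | ¬ ContinuousAt f t} with hD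
    set T : Set (Set.Icc (0:ℝ) 1) := S ∪ D with hT
    have hTcount : T.Countable := hScount.union hfdisc.countable
    haveI : Countable ↥T := hTcount.to_subtype
    haveI hTne : Nonempty ↥T := ⟨⟨hSdense.nonempty.choose, Or.inl hSdense.nonempty.choose_spec⟩⟩
    set φ : (Set.Icc (0:ℝ) 1 → ℝ) → ℝ := fun z => ⨅ t : ↥T, |f ↑t| * z ↑t with hφdef
    have hφ : Measurable φ :=
      Measurable.iInf fun t => (measurable_pi_apply (t : Set.Icc (0:ℝ) 1)).const_mul _
    have hZ : Measurable Z := measurable_pi_lambda _ hZmeas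
    set W : Ω → ℝ := fun ω => φ (Z ω) with hWdef
    have hWmeas : Measurable W := hφ.comp hZ
    have hWeq : ∀ ω, (⨅ t, |f t| * Z ω t) = W ω := by
      intro ω
      exact aux_ciInf_eq (fun t => mul_nonneg (abs_nonneg _) (hZbd ω t).1) hSdense
        (fun t ht => ContinuousAt.mul
          (continuous_abs.continuousAt.comp (not_not.mp ht)) (hZcont ω).continuousAt)
    have hW0 : ∀ ω, 0 ≤ W ω :=
      fun ω => le_ciInf fun t => mul_nonneg (abs_nonneg _) (hZbd ω _).1
    have hWbddb : ∀ ω, BddBelow (Set.range fun t : ↥T => |f ↑t| * Z ω ↑t) :=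
      fun ω => ⟨0, by rintro _ ⟨t, rfl⟩; exact mul_nonneg (abs_nonneg _) (hZbd ω _).1⟩
    have hWle : ∀ ω, W ω ≤ B * m := by
      intro ω
      rcases hTne with ⟨t⟩
      refine (ciInf_le (hWbddb ω) t).trans ?_
      exact mul_le_mul (hB _) (hZbd ω _).2 (hZbd ω _).1 hB0.le
    have hWle' : ∀ ω t, W ω ≤ |f t| * Z ω t := by
      intro ω t
      rw [← hWeq ω]
      exact ciInf_le ⟨0, by rintro _ ⟨t, rfl⟩; exact mul_nonneg (abs_nonneg _) (hZbd ω _).1⟩ t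
    -- independence of W and Y
    have hindWY : IndepFun W Y P := (hindep.comp measurable_id hφ).symm
    -- cdf notation
    set Hr : ℝ → ℝ := fun u => (P {ω | Y ω ≤ u}).toReal with hHrdef
    set He : ℝ → ENNReal := fun u => P {ω | Y ω ≤ u} with hHedef
    have hHe_eq : ∀ u, He u = ENNReal.ofReal (Hr u) :=
      fun u => (ENNReal.ofReal_toReal (measure_ne_top P _)).symm
    have hHe_meas : Measurable He := by
      have : Measurable fun u => ENNReal.ofReal (Hr u) :=
        ENNReal.measurable_ofReal.comp hHcont.measurable
      exact (funext hHe_eq : He = _) ▸ this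
    -- key identity for ≤
    have key1 : ∀ c : ℝ, P {ω | Y ω ≤ c * W ω} = ∫⁻ ω, He (c * W ω) ∂P := by
      intro c
      have hs : MeasurableSet {p : ℝ × ℝ | p.2 ≤ c * p.1} :=
        (isClosed_le continuous_snd (continuous_const.mul continuous_fst)).measurableSet
      exact aux_indep P Y W hYmeas hWmeas hindWY hs
    -- no atoms
    have key2 : ∀ c : ℝ, P {ω | Y ω = c * W ω} = 0 := by
      intro c
      have hs : MeasurableSet {p : ℝ × ℝ | p.2 = c * p.1} :=
        (isClosed_eq continuous_snd (continuous_const.mul continuous_fst)).measurableSet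
      have := aux_indep P Y W hYmeas hWmeas hindWY hs
      simp only [Set.mem_setOf_eq] at this
      rw [this]
      simp only [aux_atom P Y hYmeas hHcont]
      simp
    -- event identity
    have hevt : ∀ c : ℝ, 0 < c → c * B < -M →
        P {ω | ∀ t, c * f t < X ω t} = ∫⁻ ω, He (c * W ω) ∂P := by
      intro c hc hcM
      have sub1 : ∀ ω, Y ω < c * W ω → ∀ t, c * f t < X ω t := by
        intro ω hYlt t
        have habs : |f t| = -f t := abs_of_neg (hpos t)
        have h1 : Y ω < c * (|f t| * Z ω t) :=
          lt_of_lt_of_le hYlt (mul_le_mul_of_nonneg_left (hWle' ω t) hc.le)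
        have hzpos : 0 < Z ω t := by
          rcases lt_or_eq_of_le (hZbd ω t).1 with h | h
          · exact h
          · exfalso; rw [← h, mul_zero, mul_zero] at h1; exact absurd h1 (lt_asymm (hYpos ω))
        rw [hX ω t, if_neg hzpos.ne']
        refine lt_max_iff.mpr (Or.inl ?_)
        rw [lt_div_iff₀ hzpos]
        have h2 : Y ω < c * (-f t * Z ω t) := by rw [habs] at h1; linarith [h1]
        have h3 : c * f t * Z ω t = -(c * (-f t * Z ω t)) := by ring
        rw [h3]; linarith
      have sub2 : ∀ ω, (∀ t, c * f t < X ω t) → Y ω ≤ c * W ω := by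
        intro ω h
        have hfM : ∀ t, ¬(c * f t < M) := by
          intro t hlt
          have h1 : c * |f t| ≤ c * B := mul_le_mul_of_nonneg_left (hB t) hc.le
          have h2 : c * |f t| = -(c * f t) := by rw [abs_of_neg (hpos t)]; ring
          linarith
        have hkey : ∀ t, Y ω < c * (|f t| * Z ω t) := by
          intro t
          have ht := h t
          rw [hX ω t] at ht
          by_cases hz : Z ω t = 0
          · rw [if_pos hz] at ht; exact absurd ht (hfM t)
          · rw [if_neg hz] at ht
            have hzpos : 0 < Z ω t := lt_of_le_of_ne (hZbd ω t).1 (Ne.symm hz)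
            rcases lt_max_iff.mp ht with h' | h'
            · have h'' := (lt_div_iff₀ hzpos).mp h'
              have h3 : c * (|f t| * Z ω t) = -(c * f t * Z ω t) := by
                rw [abs_of_neg (hpos t)]; ring
              linarith
            · exact absurd h' (hfM t)
        have hdiv : Y ω / c ≤ W ω := by
          refine le_ciInf fun t => (div_le_iff₀ hc).mpr ?_
          rw [mul_comm]
          exact (hkey ↑t).le
        have := (div_le_iff₀ hc).mp hdiv
        linarith [this, mul_comm (W ω) c]
      refine le_antisymm ?_ ?_
      · exact (measure_mono fun ω h => sub2 ω h).trans (key1 c).le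
      · rw [← key1 c]
        calc P {ω | Y ω ≤ c * W ω}
            ≤ P ({ω | Y ω < c * W ω} ∪ {ω | Y ω = c * W ω}) :=
              measure_mono fun ω h => by
                simpa [Set.mem_union, Set.mem_setOf_eq] using lt_or_eq_of_le h
          _ ≤ P {ω | Y ω < c * W ω} + P {ω | Y ω = c * W ω} := measure_union_le _ _
          _ = P {ω | Y ω < c * W ω} := by rw [key2 c, add_zero]
          _ ≤ P {ω | ∀ t, c * f t < X ω t} := measure_mono fun ω h => sub1 ω h
    -- toReal conversion
    have hint : ∀ c : ℝ, (∫⁻ ω, He (c * W ω) ∂P).toReal = ∫ ω, Hr (c * W ω) ∂P := by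
      intro c
      exact (integral_toReal ((hHe_meas.comp (hWmeas.const_mul c)).aemeasurable)
        (Eventually.of_forall fun ω => measure_lt_top P _)).symm
    -- integrability
    have hHr01 : ∀ u, 0 ≤ Hr u ∧ Hr u ≤ 1 := by
      intro u
      refine ⟨ENNReal.toReal_nonneg, ?_⟩
      have h2 := ENNReal.toReal_mono ENNReal.one_ne_top (prob_le_one (μ := P)
        (s := {ω | Y ω ≤ u}))
      simpa using h2
    have int1 : ∀ c : ℝ, Integrable (fun ω => Hr (c * W ω)) P := by
      intro c
      refine (integrable_const (1:ℝ)).mono'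
        ((hHcont.measurable.comp (hWmeas.const_mul c)).aestronglyMeasurable)
        (Eventually.of_forall fun ω => ?_)
      rw [Real.norm_eq_abs, abs_of_nonneg (hHr01 _).1]
      exact (hHr01 _).2
    have int2 : Integrable W P := by
      refine (integrable_const (B * m)).mono' hWmeas.aestronglyMeasurable
        (Eventually.of_forall fun ω => ?_)
      rw [Real.norm_eq_abs, abs_of_nonneg (hW0 ω)]
      exact hWle ω
    have int3 : Integrable (fun ω => W ω ^ (1 + δ)) P := by
      refine (integrable_const ((B * m) ^ (1 + δ))).mono'
        (((Real.continuous_rpow_const h1δ.le).measurable).comp hWmeas).aestronglyMeasurable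
        (Eventually.of_forall fun ω => ?_)
      rw [Real.norm_eq_abs, abs_of_nonneg (Real.rpow_nonneg (hW0 ω) _)]
      exact Real.rpow_le_rpow (hW0 ω) (hWle ω) h1δ.le
    -- the remainder function
    set ρ : ℝ → ℝ := fun u => Hr u - u - A * u ^ (1 + δ) with hρdef
    have hρ0 : ρ 0 = 0 := by
      have h1 : {ω | Y ω ≤ (0:ℝ)} = (∅ : Set Ω) := by
        ext ω; simp [not_le.mpr (hYpos ω)]
      simp only [hρdef, hHrdef, h1, measure_empty, ENNReal.toReal_zero,
        Real.zero_rpow h1δ.ne']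
      ring
    have hsplit : ∀ c : ℝ, 0 < c →
        (∫ ω, Hr (c * W ω) ∂P) - c * ∫ ω, W ω ∂P
          - A * c ^ (1 + δ) * ∫ ω, W ω ^ (1 + δ) ∂P = ∫ ω, ρ (c * W ω) ∂P := by
      intro c hc
      have heq : ∀ ω, ρ (c * W ω)
          = Hr (c * W ω) - c * W ω - A * c ^ (1 + δ) * W ω ^ (1 + δ) := by
        intro ω
        simp only [hρdef]
        rw [Real.mul_rpow hc.le (hW0 ω)]
        ring
      have i12 : Integrable (fun ω => Hr (c * W ω) - c * W ω) P :=
        (int1 c).sub (int2.const_mul c)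
      have i3 : Integrable (fun ω => A * c ^ (1 + δ) * W ω ^ (1 + δ)) P :=
        int3.const_mul _
      refine Eq.symm ?_
      calc ∫ ω, ρ (c * W ω) ∂P
          = ∫ ω, (Hr (c * W ω) - c * W ω - A * c ^ (1 + δ) * W ω ^ (1 + δ)) ∂P :=
            integral_congr_ae (Eventually.of_forall heq)
        _ = (∫ ω, (Hr (c * W ω) - c * W ω) ∂P)
            - ∫ ω, A * c ^ (1 + δ) * W ω ^ (1 + δ) ∂P := integral_sub i12 i3
        _ = (∫ ω, Hr (c * W ω) ∂P) - (∫ ω, c * W ω ∂P)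
            - ∫ ω, A * c ^ (1 + δ) * W ω ^ (1 + δ) ∂P := by
            rw [integral_sub (int1 c) (int2.const_mul c)]
        _ = (∫ ω, Hr (c * W ω) ∂P) - c * ∫ ω, W ω ∂P
            - A * c ^ (1 + δ) * ∫ ω, W ω ^ (1 + δ) ∂P := by
            rw [integral_const_mul, integral_const_mul]
    -- rewrite the statement integrals
    have hIW : (∫ ω, (⨅ t, |f t| * Z ω t) ∂P) = ∫ ω, W ω ∂P :=
      integral_congr_ae (Eventually.of_forall hWeq)
    have hIW2 : (∫ ω, (⨅ t, |f t| * Z ω t) ^ (1 + δ) ∂P) = ∫ ω, W ω ^ (1 + δ) ∂P :=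
      integral_congr_ae (Eventually.of_forall fun ω => by
        show (⨅ t, |f t| * Z ω t) ^ (1 + δ) = W ω ^ (1 + δ)
        rw [hWeq ω])
    -- final limit
    rw [NormedAddCommGroup.tendsto_nhds_zero]
    intro ε hε
    have hCpos : (0:ℝ) < (B * m) ^ (1 + δ) := Real.rpow_pos_of_pos (by positivity) _
    set C : ℝ := (B * m) ^ (1 + δ) with hCdef
    have hε' : 0 < ε / (2 * C) := by positivity
    have h3 : ∀ᶠ u in 𝓝[>] (0:ℝ), |ρ u / u ^ (1 + δ)| < ε / (2 * C) := by
      have := Metric.tendsto_nhds.mp hH (ε / (2 * C)) hε'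
      simpa [Real.dist_eq, hρdef, hHrdef, abs_div] using this
    obtain ⟨u₀, hu₀pos, hu₀⟩ := mem_nhdsGT_iff_exists_Ioo_subset.mp h3
    have hu₀pos' : (0:ℝ) < u₀ := hu₀pos
    have hr1 : (0:ℝ) < u₀ / (B * m) := div_pos hu₀pos' (by positivity)
    have hr2 : (0:ℝ) < -M / (B + 1) := div_pos (by linarith) (by positivity)
    filter_upwards [Ioo_mem_nhdsGT (lt_min hr1 hr2)] with c hcIoo
    obtain ⟨hc, hclt⟩ := hcIoo
    have hcu : c * (B * m) < u₀ := by
      have := lt_of_lt_of_le hclt (min_le_left _ _)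
      calc c * (B * m) < (u₀ / (B * m)) * (B * m) := by
            apply mul_lt_mul_of_pos_right this; positivity
        _ = u₀ := by field_simp
    have hcM : c * B < -M := by
      have h1 := lt_of_lt_of_le hclt (min_le_right _ _)
      have h2 : c * (B + 1) < -M := by
        calc c * (B + 1) < (-M / (B + 1)) * (B + 1) := by
              apply mul_lt_mul_of_pos_right h1; positivity
          _ = -M := by field_simp
      nlinarith
    -- rewrite the expression
    have hexpr : (P {ω | ∀ t, c * f t < X ω t}).toReal
          - c * ∫ ω, (⨅ t, |f t| * Z ω t) ∂P
          - A * c ^ (1 + δ) * ∫ ω, (⨅ t, |f t| * Z ω t) ^ (1 + δ) ∂P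
        = ∫ ω, ρ (c * W ω) ∂P := by
      rw [hevt c hc hcM, hint c, hIW, hIW2, hsplit c hc]
    rw [hexpr]
    -- bound the remainder
    have hbnd : ∀ ω, ‖ρ (c * W ω)‖ ≤ ε / (2 * C) * (c ^ (1 + δ) * C) := by
      intro ω
      rcases eq_or_lt_of_le (hW0 ω) with hw | hw
      · rw [← hw, mul_zero, hρ0]
        simp only [norm_zero]
        positivity
      · set u : ℝ := c * W ω with hudef
        have hupos : 0 < u := by positivity
        have hult : u < u₀ := lt_of_le_of_lt
          (by
            have := hWle ω
            calc u = c * W ω := rfl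
              _ ≤ c * (B * m) := mul_le_mul_of_nonneg_left (hWle ω) hc.le) hcu
        have h5 := hu₀ ⟨hupos, hult⟩
        have hupow : (0:ℝ) < u ^ (1 + δ) := Real.rpow_pos_of_pos hupos _
        have h6 : |ρ u| ≤ ε / (2 * C) * u ^ (1 + δ) := by
          have h7 : |ρ u| = |ρ u / u ^ (1 + δ)| * u ^ (1 + δ) := by
            rw [abs_div, abs_of_pos hupow, div_mul_cancel₀ _ hupow.ne']
          rw [h7]
          exact mul_le_mul_of_nonneg_right h5.le hupow.le
        have h8 : u ^ (1 + δ) ≤ c ^ (1 + δ) * C := by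
          rw [hCdef, ← Real.mul_rpow hc.le (by positivity : (0:ℝ) ≤ B * m)]
          exact Real.rpow_le_rpow hupos.le
            (mul_le_mul_of_nonneg_left (hWle ω) hc.le) h1δ.le
        rw [Real.norm_eq_abs]
        calc |ρ u| ≤ ε / (2 * C) * u ^ (1 + δ) := h6
          _ ≤ ε / (2 * C) * (c ^ (1 + δ) * C) :=
            mul_le_mul_of_nonneg_left h8 hε'.le
    have h9 : ‖∫ ω, ρ (c * W ω) ∂P‖ ≤ ε / (2 * C) * (c ^ (1 + δ) * C) := by
      have := norm_integral_le_of_norm_le_const (μ := P)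
        (C := ε / (2 * C) * (c ^ (1 + δ) * C)) (Eventually.of_forall hbnd)
      simpa using this
    have hcpow : (0:ℝ) < c ^ (1 + δ) := Real.rpow_pos_of_pos hc _
    have hcnegpow : c ^ (-(1 + δ)) = (c ^ (1 + δ))⁻¹ := Real.rpow_neg hc.le _
    rw [norm_mul, Real.norm_eq_abs, Real.norm_eq_abs]
    have h10 : |c ^ (-(1 + δ))| = (c ^ (1 + δ))⁻¹ := by
      rw [hcnegpow, abs_of_pos (inv_pos.mpr hcpow)]
    rw [h10]
    calc (c ^ (1 + δ))⁻¹ * |∫ ω, ρ (c * W ω) ∂P|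
        ≤ (c ^ (1 + δ))⁻¹ * (ε / (2 * C) * (c ^ (1 + δ) * C)) := by
          apply mul_le_mul_of_nonneg_left _ (inv_pos.mpr hcpow).le
          rw [← Real.norm_eq_abs]; exact h9
      _ = ε / 2 := by field_simp
      _ < ε := by linarith
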